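/- Let X, U, Y be Hilbert spaces, A generate a C₀-semigroup on X, B ∈ L(U,X), C ∈ L(X,Y). On the interval [ℓ,r] consider the operator M_{[ℓ,r]} defined on pairs (x, λ, v_x, v_λ) with x ∈ H¹([ℓ,r];X) ∩ L²([ℓ,r];dom(A)), λ ∈ H¹([ℓ,r];X) ∩ L²([ℓ,r];dom(A*)), v_x, v_λ ∈ X, by M_{[ℓ,r]}(x,λ,v_x,v_λ) = (−C*Cx + λ̇ + A*λ − λ(r)δ_r + v_λδ_r, ẋ − Ax + x(ℓ)δ_ℓ − BB*λ − v_xδ_ℓ, λ(ℓ), −x(r)), acting on W = (L²([ℓ,r];X)×X) × (L²([ℓ,r];X)×X) × X × X. Then M_{[ℓ,r]} is dissipative; more precisely, Re⟨(x+x(r)δ_r, λ+λ(ℓ)δ_ℓ, v_x, v_λ), M_{[ℓ,r]}(x,λ,v_x,v_λ)⟩_W = −‖Cx‖²_{L²([ℓ,r];Y)} − ‖B*λ‖²_{L²([ℓ,r];U)} ≤ 0. -/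

import Mathlib

open intervalIntegral MeasureTheory

lemma inner_intervalIntegrable {X : Type*}
    [NormedAddCommGroup X] [InnerProductSpace ℂ X]
    {φ g : ℝ → X} {a b : ℝ}
    (hφ : ContinuousOn φ (Set.uIcc a b))
    (hg : IntervalIntegrable g volume a b) :
    IntervalIntegrable (fun t => (inner ℂ (φ t) (g t) : ℂ)) volume a b := by
  rw [intervalIntegrable_iff] at hg ⊢
  obtain ⟨M, hM⟩ := isCompact_uIcc.exists_bound_of_continuousOn hφ
  have hsub : Set.uIoc a b ⊆ Set.uIcc a b := Set.Ioc_subset_Icc_self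
  have hmeas : AEStronglyMeasurable (fun t => (inner ℂ (φ t) (g t) : ℂ))
      (volume.restrict (Set.uIoc a b)) :=
    AEStronglyMeasurable.inner
      ((hφ.mono hsub).aestronglyMeasurable measurableSet_uIoc)
      hg.aestronglyMeasurable
  refine Integrable.mono' (hg.norm.const_mul M) hmeas ?_
  filter_upwards [ae_restrict_mem measurableSet_uIoc] with t ht
  calc ‖(inner ℂ (φ t) (g t) : ℂ)‖ ≤ ‖φ t‖ * ‖g t‖ := norm_inner_le_norm _ _
    _ ≤ M * ‖g t‖ := by
        have := hM t (hsub ht)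
        nlinarith [norm_nonneg (φ t), norm_nonneg (g t)]

lemma inner_intervalIntegrable' {X : Type*}
    [NormedAddCommGroup X] [InnerProductSpace ℂ X]
    {φ g : ℝ → X} {a b : ℝ}
    (hφ : ContinuousOn φ (Set.uIcc a b))
    (hg : IntervalIntegrable g volume a b) :
    IntervalIntegrable (fun t => (inner ℂ (g t) (φ t) : ℂ)) volume a b := by
  rw [intervalIntegrable_iff] at hg ⊢
  obtain ⟨M, hM⟩ := isCompact_uIcc.exists_bound_of_continuousOn hφ
  have hsub : Set.uIoc a b ⊆ Set.uIcc a b := Set.Ioc_subset_Icc_self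
  have hmeas : AEStronglyMeasurable (fun t => (inner ℂ (g t) (φ t) : ℂ))
      (volume.restrict (Set.uIoc a b)) :=
    AEStronglyMeasurable.inner hg.aestronglyMeasurable
      ((hφ.mono hsub).aestronglyMeasurable measurableSet_uIoc)
  refine Integrable.mono' (hg.norm.const_mul M) hmeas ?_
  filter_upwards [ae_restrict_mem measurableSet_uIoc] with t ht
  calc ‖(inner ℂ (g t) (φ t) : ℂ)‖ ≤ ‖g t‖ * ‖φ t‖ := norm_inner_le_norm _ _
    _ ≤ M * ‖g t‖ := by
        have := hM t (hsub ht)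
        nlinarith [norm_nonneg (φ t), norm_nonneg (g t)]

lemma re_intervalIntegrable {f : ℝ → ℂ} {a b : ℝ}
    (h : IntervalIntegrable f volume a b) :
    IntervalIntegrable (fun t => (f t).re) volume a b :=
  ⟨h.1.re, h.2.re⟩

/-- Dissipativity of the local optimality-system operator `M_{[ℓ,r]}`:
for `x` an `X`-valued function with values in `dom(A)` and derivative `x'`,
`λ` with values in `dom(A*)` and derivative `λ'`, and `v_x, v_λ ∈ X`, the
`W`-inner ℂ product of `(x + x(r)δ_r, λ + λ(ℓ)δ_ℓ, v_x, v_λ)` with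
`M_{[ℓ,r]}(x, λ, v_x, v_λ) = (−C*Cx + λ̇ + A*λ − λ(r)δ_r + v_λδ_r,
ẋ − Ax + x(ℓ)δ_ℓ − BB*λ − v_xδ_ℓ, λ(ℓ), −x(r))` has real part
`−‖Cx‖²_{L²([ℓ,r];Y)} − ‖B*λ‖²_{L²([ℓ,r];U)} ≤ 0`; in particular `M_{[ℓ,r]}` is
dissipative. -/
theorem stmt10 {X U Y : Type*}
    [NormedAddCommGroup X] [InnerProductSpace ℂ X] [CompleteSpace X]
    [NormedAddCommGroup U] [InnerProductSpace ℂ U] [CompleteSpace U]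
    [NormedAddCommGroup Y] [InnerProductSpace ℂ Y] [CompleteSpace Y]
    (domA domAs : Submodule ℂ X)
    (A : domA →ₗ[ℂ] X) (Astar : domAs →ₗ[ℂ] X)
    (hadj : ∀ (u : domA) (v : domAs),
      (inner ℂ (A u) ((v : X)) : ℂ) = (inner ℂ ((u : X)) (Astar v) : ℂ))
    (B : U →L[ℂ] X) (C : X →L[ℂ] Y)
    (ℓ r : ℝ) (hlr : ℓ < r)
    (x lam x' lam' : ℝ → X)
    (hxdom : ∀ t, x t ∈ domA) (hlamdom : ∀ t, lam t ∈ domAs)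
    (hx : ∀ t ∈ Set.Icc ℓ r, HasDerivAt x (x' t) t)
    (hlam : ∀ t ∈ Set.Icc ℓ r, HasDerivAt lam (lam' t) t)
    (hx' : IntervalIntegrable x' volume ℓ r)
    (hlam' : IntervalIntegrable lam' volume ℓ r)
    (hAx : IntervalIntegrable (fun t => A ⟨x t, hxdom t⟩) volume ℓ r)
    (hAslam : IntervalIntegrable (fun t => Astar ⟨lam t, hlamdom t⟩) volume ℓ r)
    (vx vlam : X) :
    ((∫ t in ℓ..r,
        (inner ℂ (x t)
          (-(ContinuousLinearMap.adjoint C (C (x t))) + lam' t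
            + Astar ⟨lam t, hlamdom t⟩) : ℂ).re)
      + (inner ℂ (x r) (-(lam r) + vlam) : ℂ).re
      + (∫ t in ℓ..r,
          (inner ℂ (lam t)
            (x' t - A ⟨x t, hxdom t⟩
              - B (ContinuousLinearMap.adjoint B (lam t))) : ℂ).re)
      + (inner ℂ (lam ℓ) (x ℓ - vx) : ℂ).re
      + (inner ℂ vx (lam ℓ) : ℂ).re
      + (inner ℂ vlam (-(x r)) : ℂ).re
      = -(∫ t in ℓ..r, ‖C (x t)‖ ^ 2)
        - ∫ t in ℓ..r, ‖ContinuousLinearMap.adjoint B (lam t)‖ ^ 2) ∧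
    ((∫ t in ℓ..r,
        (inner ℂ (x t)
          (-(ContinuousLinearMap.adjoint C (C (x t))) + lam' t
            + Astar ⟨lam t, hlamdom t⟩) : ℂ).re)
      + (inner ℂ (x r) (-(lam r) + vlam) : ℂ).re
      + (∫ t in ℓ..r,
          (inner ℂ (lam t)
            (x' t - A ⟨x t, hxdom t⟩
              - B (ContinuousLinearMap.adjoint B (lam t))) : ℂ).re)
      + (inner ℂ (lam ℓ) (x ℓ - vx) : ℂ).re
      + (inner ℂ vx (lam ℓ) : ℂ).re
      + (inner ℂ vlam (-(x r)) : ℂ).re ≤ 0) := by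
  have hle : ℓ ≤ r := hlr.le
  have hIcc : Set.uIcc ℓ r = Set.Icc ℓ r := Set.uIcc_of_le hle
  have resymm : ∀ (a b : X), (inner ℂ a b : ℂ).re = (inner ℂ b a : ℂ).re := by
    intro a b
    rw [show (inner ℂ b a : ℂ) = starRingEnd ℂ (inner ℂ a b) from (inner_conj_symm _ _).symm,
      Complex.conj_re]
  have hxc : ContinuousOn x (Set.uIcc ℓ r) := by
    intro t ht
    exact ((hx t (hIcc ▸ ht)).continuousAt).continuousWithinAt
  have hlamc : ContinuousOn lam (Set.uIcc ℓ r) := by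
    intro t ht
    exact ((hlam t (hIcc ▸ ht)).continuousAt).continuousWithinAt
  -- integrability of the various pieces
  have iCx : IntervalIntegrable (fun t => ‖C (x t)‖ ^ 2) volume ℓ r :=
    ((C.continuous.comp_continuousOn hxc).norm.pow 2).intervalIntegrable
  have iBlam : IntervalIntegrable
      (fun t => ‖ContinuousLinearMap.adjoint B (lam t)‖ ^ 2) volume ℓ r :=
    (((ContinuousLinearMap.adjoint B).continuous.comp_continuousOn
      hlamc).norm.pow 2).intervalIntegrable
  have i1 : IntervalIntegrable (fun t => ((inner ℂ (x t) (lam' t) : ℂ)).re) volume ℓ r :=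
    re_intervalIntegrable (inner_intervalIntegrable hxc hlam')
  have i2 : IntervalIntegrable
      (fun t => ((inner ℂ (x t) (Astar ⟨lam t, hlamdom t⟩) : ℂ)).re) volume ℓ r :=
    re_intervalIntegrable (inner_intervalIntegrable hxc hAslam)
  have i3 : IntervalIntegrable (fun t => ((inner ℂ (lam t) (x' t) : ℂ)).re) volume ℓ r :=
    re_intervalIntegrable (inner_intervalIntegrable hlamc hx')
  have i4 : IntervalIntegrable
      (fun t => ((inner ℂ (lam t) (A ⟨x t, hxdom t⟩) : ℂ)).re) volume ℓ r :=
    re_intervalIntegrable (inner_intervalIntegrable hlamc hAx)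
  have i1' : IntervalIntegrable (fun t => ((inner ℂ (x' t) (lam t) : ℂ)).re) volume ℓ r :=
    re_intervalIntegrable (inner_intervalIntegrable' hlamc hx')
  -- fundamental theorem of calculus for Re⟪x, lam⟫
  have ftc : (∫ t in ℓ..r, (((inner ℂ (x t) (lam' t) : ℂ)).re
        + ((inner ℂ (x' t) (lam t) : ℂ)).re))
      = ((inner ℂ (x r) (lam r) : ℂ)).re - ((inner ℂ (x ℓ) (lam ℓ) : ℂ)).re := by
    refine integral_eq_sub_of_hasDerivAt
      (f := fun t => ((inner ℂ (x t) (lam t) : ℂ)).re) (fun t ht => ?_) (i1.add i1')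
    have h := HasDerivAt.inner ℂ (hx t (hIcc ▸ ht)) (hlam t (hIcc ▸ ht))
    have h2 := Complex.reCLM.hasFDerivAt.comp_hasDerivAt t h
    simpa [Function.comp_def] using h2
  -- first statement integral
  have e1 : (∫ t in ℓ..r,
        (inner ℂ (x t)
          (-(ContinuousLinearMap.adjoint C (C (x t))) + lam' t
            + Astar ⟨lam t, hlamdom t⟩) : ℂ).re)
      = (-(∫ t in ℓ..r, ‖C (x t)‖ ^ 2))
        + (∫ t in ℓ..r, ((inner ℂ (x t) (lam' t) : ℂ)).re)
        + ∫ t in ℓ..r, ((inner ℂ (x t) (Astar ⟨lam t, hlamdom t⟩) : ℂ)).re := by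
    have iCxneg : IntervalIntegrable (fun t => -‖C (x t)‖ ^ 2) volume ℓ r := iCx.neg
    rw [show (-(∫ t in ℓ..r, ‖C (x t)‖ ^ 2)) = ∫ t in ℓ..r, -‖C (x t)‖ ^ 2 from
        (intervalIntegral.integral_neg).symm,
      ← intervalIntegral.integral_add iCxneg i1,
      ← intervalIntegral.integral_add (iCxneg.add i1) i2]
    refine intervalIntegral.integral_congr fun t ht => ?_
    have hadjC : (inner ℂ (x t) (ContinuousLinearMap.adjoint C (C (x t))) : ℂ)
        = inner ℂ (C (x t)) (C (x t)) := ContinuousLinearMap.adjoint_inner_right _ _ _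
    simp [inner_add_right, inner_neg_right, hadjC, inner_self_eq_norm_sq_to_K,
      ← Complex.ofReal_pow]
  -- second statement integral
  have e2 : (∫ t in ℓ..r,
        (inner ℂ (lam t)
          (x' t - A ⟨x t, hxdom t⟩
            - B (ContinuousLinearMap.adjoint B (lam t))) : ℂ).re)
      = (∫ t in ℓ..r, ((inner ℂ (lam t) (x' t) : ℂ)).re)
        - (∫ t in ℓ..r, ((inner ℂ (lam t) (A ⟨x t, hxdom t⟩) : ℂ)).re)
        - ∫ t in ℓ..r, ‖ContinuousLinearMap.adjoint B (lam t)‖ ^ 2 := by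
    rw [← intervalIntegral.integral_sub i3 i4,
      ← intervalIntegral.integral_sub (i3.sub i4) iBlam]
    refine intervalIntegral.integral_congr fun t ht => ?_
    have hadjB : (inner ℂ (lam t) (B (ContinuousLinearMap.adjoint B (lam t))) : ℂ)
        = inner ℂ (ContinuousLinearMap.adjoint B (lam t))
            (ContinuousLinearMap.adjoint B (lam t)) :=
      (ContinuousLinearMap.adjoint_inner_left _ _ _).symm
    simp [inner_sub_right, hadjB, inner_self_eq_norm_sq_to_K, ← Complex.ofReal_pow]
  -- swap lemmas
  have eswap : (∫ t in ℓ..r, ((inner ℂ (lam t) (A ⟨x t, hxdom t⟩) : ℂ)).re)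
      = ∫ t in ℓ..r, ((inner ℂ (x t) (Astar ⟨lam t, hlamdom t⟩) : ℂ)).re := by
    refine intervalIntegral.integral_congr fun t ht => ?_
    rw [← hadj ⟨x t, hxdom t⟩ ⟨lam t, hlamdom t⟩]
    exact resymm _ _
  have eswap2 : (∫ t in ℓ..r, ((inner ℂ (lam t) (x' t) : ℂ)).re)
      = ∫ t in ℓ..r, ((inner ℂ (x' t) (lam t) : ℂ)).re :=
    intervalIntegral.integral_congr fun t ht => resymm _ _
  have esum : (∫ t in ℓ..r, ((inner ℂ (x t) (lam' t) : ℂ)).re)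
      + (∫ t in ℓ..r, ((inner ℂ (x' t) (lam t) : ℂ)).re)
      = ((inner ℂ (x r) (lam r) : ℂ)).re - ((inner ℂ (x ℓ) (lam ℓ) : ℂ)).re := by
    rw [← intervalIntegral.integral_add i1 i1']
    exact ftc
  have key : ((∫ t in ℓ..r,
        (inner ℂ (x t)
          (-(ContinuousLinearMap.adjoint C (C (x t))) + lam' t
            + Astar ⟨lam t, hlamdom t⟩) : ℂ).re)
      + (inner ℂ (x r) (-(lam r) + vlam) : ℂ).re
      + (∫ t in ℓ..r,
          (inner ℂ (lam t)
            (x' t - A ⟨x t, hxdom t⟩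
              - B (ContinuousLinearMap.adjoint B (lam t))) : ℂ).re)
      + (inner ℂ (lam ℓ) (x ℓ - vx) : ℂ).re
      + (inner ℂ vx (lam ℓ) : ℂ).re
      + (inner ℂ vlam (-(x r)) : ℂ).re
      = -(∫ t in ℓ..r, ‖C (x t)‖ ^ 2)
        - ∫ t in ℓ..r, ‖ContinuousLinearMap.adjoint B (lam t)‖ ^ 2) := by
    rw [e1, e2, eswap, eswap2]
    have b1 : (inner ℂ (x r) (-(lam r) + vlam) : ℂ).re
        = -((inner ℂ (x r) (lam r) : ℂ)).re + ((inner ℂ (x r) vlam : ℂ)).re := by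
      simp [inner_add_right, inner_neg_right]
    have b2 : (inner ℂ (lam ℓ) (x ℓ - vx) : ℂ).re
        = ((inner ℂ (x ℓ) (lam ℓ) : ℂ)).re - ((inner ℂ (lam ℓ) vx : ℂ)).re := by
      rw [inner_sub_right]
      simp [resymm (lam ℓ) (x ℓ)]
    have b3 : (inner ℂ vx (lam ℓ) : ℂ).re = ((inner ℂ (lam ℓ) vx : ℂ)).re := resymm _ _
    have b4 : (inner ℂ vlam (-(x r)) : ℂ).re = -((inner ℂ (x r) vlam : ℂ)).re := by
      rw [inner_neg_right]
      simp [resymm vlam (x r)]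
    rw [b1, b2, b3, b4]
    linarith [esum]
  refine ⟨key, ?_⟩
  rw [key]
  have h1 : 0 ≤ ∫ t in ℓ..r, ‖C (x t)‖ ^ 2 :=
    intervalIntegral.integral_nonneg hle fun t ht => by positivity
  have h2 : 0 ≤ ∫ t in ℓ..r, ‖ContinuousLinearMap.adjoint B (lam t)‖ ^ 2 :=
    intervalIntegral.integral_nonneg hle fun t ht => by positivity
  linarith
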